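/- arXiv:1412.7103 — 2 statements merged into one kernel-verified Lean document; each statement's English description precedes it below -/
import Mathlib

section
/- Let γ > 1 and let φ, ψ : ℝ → ℂ be integrable functions whose Fourier transforms satisfy |Fψ(u)| ≤ C |u|^γ / (1+|u|)^{2γ} for all u ∈ ℝ. For j < l and k, m ∈ ℤ define ψ_{j,k}(x) = 2^{j/2} ψ(2^j x − k). Then |⟨ψ_{l,m}, ψ_{j,k}′⟩| ≤ C′ 2^{l − (l−j)(γ − 1/2)} for a constant C′ depending only on C and γ, where ψ_{j,k}′ denotes the derivative. -/
open Real Complex MeasureTheory FourierTransform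

lemma fourier_affine (f : ℝ → ℂ) (r b c : ℝ) (hb : 0 < b) (w : ℝ) :
    𝓕 (fun x => (r:ℂ) * f (b * x - c)) w
      = |b⁻¹| • ((r:ℂ) * Complex.exp (↑(-2*π*(c*(w/b)))*Complex.I) * 𝓕 f (w / b)) := by
  set K : ℝ → ℂ := fun t => (r:ℂ) * Complex.exp (↑(-2*π*(t*(w/b)))*Complex.I) * f (t - c) with hK
  have h1 : 𝓕 (fun x => (r:ℂ) * f (b * x - c)) w = ∫ x : ℝ, K (b * x) := by
    rw [Real.fourier_real_eq_integral_exp_smul]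
    congr 1
    funext x
    have e1 : b * x * (w / b) = x * w := by field_simp
    rw [hK]
    simp only [smul_eq_mul, e1]
    rw [show -2 * π * x * w = -2*π*(x*w) by ring]
    ring
  rw [h1, MeasureTheory.Measure.integral_comp_mul_left]
  congr 1
  rw [← MeasureTheory.integral_add_right_eq_self K c]
  have h2 : ∀ s : ℝ, K (s + c)
      = ((r:ℂ) * Complex.exp (↑(-2*π*(c*(w/b)))*Complex.I)) *
        (Complex.exp (↑(-2*π*(s*(w/b)))*Complex.I) * f s) := by
    intro s
    rw [hK]
    simp only [add_sub_cancel_right]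
    rw [show (-2*π*((s + c)*(w/b))) = (-2*π*(c*(w/b))) + (-2*π*(s*(w/b))) by ring]
    push_cast
    rw [add_mul, Complex.exp_add]
    ring
  simp_rw [h2, MeasureTheory.integral_const_mul]
  rw [Real.fourier_real_eq_integral_exp_smul]
  simp_rw [smul_eq_mul, mul_assoc]


lemma norm_fourier_affine (f : ℝ → ℂ) (r b c : ℝ) (hb : 0 < b) (w : ℝ) :
    ‖𝓕 (fun x => (r:ℂ) * f (b * x - c)) w‖ = |r| * b⁻¹ * ‖𝓕 f (w / b)‖ := by
  rw [fourier_affine f r b c hb w, norm_smul, norm_mul, norm_mul]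
  rw [Complex.norm_exp_ofReal_mul_I]
  simp [Real.norm_eq_abs, abs_of_pos (inv_pos.mpr hb), abs_of_pos hb]
  ring

lemma fourier_conj (g : ℝ → ℂ) (w : ℝ) :
    𝓕 (fun x => (starRingEnd ℂ) (g x)) w = (starRingEnd ℂ) (𝓕 g (-w)) := by
  rw [Real.fourier_real_eq_integral_exp_smul, Real.fourier_real_eq_integral_exp_smul,
    ← integral_conj]
  congr 1
  funext x
  simp only [smul_eq_mul, map_mul, ← Complex.exp_conj, Complex.conj_ofReal, map_neg, Complex.conj_I,
    mul_neg]
  congr 2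
  push_cast
  ring


lemma rcalc (a b t γ : ℝ) (ha : 0 < a) (hb : 0 < b) (ht : 0 < t) :
    (t/b) * ((t/a)^γ) * ((t/b)^(-γ)) = (a/b)^(1-γ) * (t/a) := by
  have h1 : (0:ℝ) < t/a := by positivity
  have h2 : (0:ℝ) < t/b := by positivity
  have h3 : (0:ℝ) < a/b := by positivity
  rw [Real.rpow_neg h2.le, show (1-γ) = 1 + (-γ) by ring, Real.rpow_add h3,
    Real.rpow_one, Real.rpow_neg h3.le,
    Real.div_rpow ht.le ha.le, Real.div_rpow ht.le hb.le, Real.div_rpow ha.le hb.le]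
  have hta := (Real.rpow_pos_of_pos ht γ).ne'
  have haa := (Real.rpow_pos_of_pos ha γ).ne'
  have hbb := (Real.rpow_pos_of_pos hb γ).ne'
  field_simp

set_option maxHeartbeats 1000000 in
/-- wavelet cross-coefficient bound from Fourier decay: if
`|Fψ(u)| ≤ C |u|^γ/(1+|u|)^{2γ}` with `γ > 1`, then for `j < l`,
`|⟨ψ_{l,m}, ψ_{j,k}'⟩| ≤ C' 2^{l-(l-j)(γ-1/2)}` with `C'` depending only on `C` and `γ`. -/
theorem stmt6 (C γ : ℝ) (hγ : 1 < γ) (hC : 0 < C) :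
    ∃ C' : ℝ, 0 < C' ∧
      ∀ ψ : ℝ → ℂ, ContDiff ℝ 1 ψ → HasCompactSupport ψ →
        (∀ u : ℝ, ‖FourierTransform.fourier ψ u‖ ≤ C * |u| ^ γ / (1 + |u|) ^ (2 * γ)) →
        ∀ j l k m : ℤ, j < l →
          ‖∫ x : ℝ, (((2:ℝ) ^ ((l : ℝ) / 2) : ℝ) : ℂ) * ψ ((2:ℝ) ^ l * x - (m : ℝ)) *
              (starRingEnd ℂ)
                (deriv (fun y : ℝ =>
                  (((2:ℝ) ^ ((j : ℝ) / 2) : ℝ) : ℂ) * ψ ((2:ℝ) ^ j * y - (k : ℝ))) x)‖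
            ≤ C' * 2 ^ ((l : ℝ) - ((l : ℝ) - (j : ℝ)) * (γ - 1 / 2)) := by
  classical
  set Bf : ℝ → ℝ := fun v => |v| * (1 + |v|) ^ (-(2*γ)) with hBf
  have hBf_nonneg : ∀ v, 0 ≤ Bf v := by
    intro v
    have : (0:ℝ) < 1 + |v| := by positivity
    positivity
  have hBf_cont : Continuous Bf := by
    have h2 : Continuous fun v : ℝ => (1+|v|) ^ (-(2*γ)) :=
      Continuous.rpow_const (by fun_prop) (fun v => Or.inl (by positivity))
    exact (continuous_abs : Continuous fun v : ℝ => |v|).mul h2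
  have hBf_int : Integrable Bf := by
    have h1 : Integrable (fun v : ℝ => (1 + ‖v‖) ^ (-(2*γ - 1))) :=
      integrable_one_add_norm (by simpa using by linarith : (Module.finrank ℝ ℝ : ℝ) < 2*γ - 1)
    refine h1.mono' hBf_cont.aestronglyMeasurable (Filter.Eventually.of_forall fun v => ?_)
    have hv : (0:ℝ) < 1 + |v| := by positivity
    rw [Real.norm_eq_abs, _root_.abs_of_nonneg (hBf_nonneg v)]
    calc |v| * (1 + |v|) ^ (-(2*γ))
        ≤ (1 + |v|) * (1 + |v|) ^ (-(2*γ)) := by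
          apply mul_le_mul_of_nonneg_right (by linarith [abs_nonneg v])
          positivity
      _ = (1 + |v|) ^ (-(2*γ - 1)) := by
          rw [show -(2*γ - 1) = 1 + (-(2*γ)) by ring, Real.rpow_add hv, Real.rpow_one]
      _ = (1 + ‖v‖) ^ (-(2*γ - 1)) := by rw [Real.norm_eq_abs]
  set B : ℝ := ∫ v, Bf v with hB
  have hB0 : 0 ≤ B := integral_nonneg hBf_nonneg
  have hC'pos : 0 < 2*π*C^2*B + 1 := by
    have : 0 ≤ 2*π*C^2*B := by positivity
    linarith
  refine ⟨2*π*C^2*B + 1, hC'pos, ?_⟩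
  intro ψ hψ hψs hdecay j l k m hjl
  have hψc : Continuous ψ := hψ.continuous
  have hψd : Differentiable ℝ ψ := hψ.differentiable one_ne_zero
  have hψint : Integrable ψ := hψc.integrable_of_hasCompactSupport hψs
  have hdc : Continuous (deriv ψ) := hψ.continuous_deriv le_rfl
  have hds : HasCompactSupport (deriv ψ) := hψs.deriv
  have hdint : Integrable (deriv ψ) := hdc.integrable_of_hasCompactSupport hds
  have hFψd : 𝓕 (deriv ψ) = fun x : ℝ => (2 * ↑π * Complex.I * ↑x) • 𝓕 ψ x :=
    Real.fourier_deriv hψint hψd hdint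
  have hγ0 : (0:ℝ) < γ := by linarith
  -- decay consequences
  have decay1 : ∀ u : ℝ, ‖𝓕 ψ u‖ ≤ C * (1 + |u|) ^ (-γ) := by
    intro u
    have hu : (0:ℝ) < 1 + |u| := by positivity
    refine (hdecay u).trans ?_
    rw [div_le_iff₀ (by positivity), show -γ = γ - 2*γ by ring, Real.rpow_sub hu]
    rw [mul_assoc, div_mul_cancel₀ _ (by positivity : ((1+|u|) ^ (2*γ)) ≠ 0)]
    apply mul_le_mul_of_nonneg_left _ hC.le
    exact Real.rpow_le_rpow (abs_nonneg u) (by linarith [abs_nonneg u]) hγ0.le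
  have decay2 : ∀ u : ℝ, ‖𝓕 ψ u‖ ≤ C * |u| ^ (-γ) := by
    intro u
    rcases eq_or_ne u 0 with rfl | hu
    · have h0 : ‖𝓕 ψ 0‖ ≤ 0 := by
        simpa [Real.zero_rpow hγ0.ne'] using hdecay 0
      simpa [Real.zero_rpow (by linarith : -γ ≠ 0)] using h0
    · have hu' : (0:ℝ) < |u| := abs_pos.mpr hu
      refine (hdecay u).trans ?_
      rw [show -γ = γ - 2*γ by ring, Real.rpow_sub hu', mul_div_assoc]
      apply mul_le_mul_of_nonneg_left _ hC.le
      apply div_le_div_of_nonneg_left (by positivity) (by positivity)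
      exact Real.rpow_le_rpow hu'.le (by linarith [abs_nonneg u]) (by positivity)
  have hFψint : Integrable (𝓕 ψ) := by
    have h1 : Integrable (fun u : ℝ => C * (1 + ‖u‖) ^ (-γ)) :=
      (integrable_one_add_norm (by simpa using hγ : (Module.finrank ℝ ℝ : ℝ) < γ)).const_mul C
    refine h1.mono' ?_ (Filter.Eventually.of_forall fun u => ?_)
    · exact (VectorFourier.fourierIntegral_continuous Real.continuous_fourierChar
        (by exact continuous_inner) hψint).aestronglyMeasurable
    · simpa using decay1 u
  -- dilation parameters
  set a : ℝ := (2:ℝ) ^ l with haa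
  set b : ℝ := (2:ℝ) ^ j with hbb
  have ha : (0:ℝ) < a := zpow_pos two_pos l
  have hb : (0:ℝ) < b := zpow_pos two_pos j
  set cl : ℝ := (2:ℝ) ^ ((l:ℝ)/2) with hcl
  set cj : ℝ := (2:ℝ) ^ ((j:ℝ)/2) with hcj
  have hclp : (0:ℝ) < cl := Real.rpow_pos_of_pos two_pos _
  have hcjp : (0:ℝ) < cj := Real.rpow_pos_of_pos two_pos _
  have hder : ∀ x : ℝ, deriv (fun y : ℝ => ((cj:ℝ):ℂ) * ψ (b*y - (k:ℝ))) x
      = ((cj*b : ℝ):ℂ) * deriv ψ (b*x - (k:ℝ)) := by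
    intro x
    have h1 : HasDerivAt (fun y : ℝ => b*y - (k:ℝ)) b x := by
      simpa using ((hasDerivAt_id x).const_mul b).sub_const (k:ℝ)
    have h2 : HasDerivAt ψ (deriv ψ (b*x - (k:ℝ))) (b*x - (k:ℝ)) :=
      (hψd (b*x - (k:ℝ))).hasDerivAt
    have h3 : HasDerivAt (fun y : ℝ => ψ (b*y - (k:ℝ))) (b • deriv ψ (b*x - (k:ℝ))) x :=
      h2.scomp x h1
    have h4 := h3.const_mul ((cj:ℝ):ℂ)
    rw [h4.deriv]
    push_cast
    rw [Complex.real_smul]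
    ring
  set F : ℝ → ℂ := fun x => ((cl:ℝ):ℂ) * ψ (a*x - (m:ℝ)) with hFdef
  set g₀ : ℝ → ℂ := fun x => ((cj*b : ℝ):ℂ) * deriv ψ (b*x - (k:ℝ)) with hg0def
  set G : ℝ → ℂ := fun x => (starRingEnd ℂ) (g₀ x) with hGdef
  have hgoal_eq : (∫ x : ℝ, (((2:ℝ) ^ ((l : ℝ) / 2) : ℝ) : ℂ) * ψ ((2:ℝ) ^ l * x - (m : ℝ)) *
              (starRingEnd ℂ)
                (deriv (fun y : ℝ =>
                  (((2:ℝ) ^ ((j : ℝ) / 2) : ℝ) : ℂ) * ψ ((2:ℝ) ^ j * y - (k : ℝ))) x))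
      = ∫ x : ℝ, F x * G x := by
    congr 1
    funext x
    rw [hFdef, hGdef, hg0def]
    simp only
    rw [hder x]
  rw [hgoal_eq]
  have hFc : Continuous F := by
    rw [hFdef]
    exact continuous_const.mul (hψc.comp (by continuity))
  have hFint : Integrable F := by
    rw [hFdef]
    exact ((hψint.comp_sub_right (m:ℝ)).comp_mul_left' ha.ne').const_mul _
  have hg0int : Integrable g₀ := by
    rw [hg0def]
    exact ((hdint.comp_sub_right (k:ℝ)).comp_mul_left' hb.ne').const_mul _
  have hGint : Integrable G := by
    rw [hGdef]
    refine hg0int.norm.mono' (continuous_star.comp_aestronglyMeasurable hg0int.aestronglyMeasurable)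
      (Filter.Eventually.of_forall fun x => ?_)
    simp
  have nF : ∀ w : ℝ, ‖𝓕 F w‖ = cl * a⁻¹ * ‖𝓕 ψ (w/a)‖ := by
    intro w
    have := norm_fourier_affine ψ cl a (m:ℝ) ha w
    rw [hFdef]
    simpa [abs_of_pos hclp] using this
  have hFhat_int : Integrable (𝓕 F) := by
    have h1 : Integrable (fun w : ℝ => (1 + ‖a⁻¹ * w‖) ^ (-γ)) :=
      (integrable_one_add_norm (E := ℝ) (by simpa using hγ)).comp_mul_left'
        (by positivity : (a:ℝ)⁻¹ ≠ 0)
    refine (h1.const_mul (cl * a⁻¹ * C)).mono' ?_ (Filter.Eventually.of_forall fun w => ?_)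
    · exact (VectorFourier.fourierIntegral_continuous Real.continuous_fourierChar
        (by exact continuous_inner) hFint).aestronglyMeasurable
    · rw [nF w, show w / a = a⁻¹ * w by rw [inv_mul_eq_div]]
      calc cl * a⁻¹ * ‖𝓕 ψ (a⁻¹*w)‖
          ≤ cl * a⁻¹ * (C * (1+|a⁻¹*w|) ^ (-γ)) :=
            mul_le_mul_of_nonneg_left (decay1 _) (by positivity)
        _ = cl * a⁻¹ * C * (1+‖a⁻¹*w‖) ^ (-γ) := by rw [Real.norm_eq_abs]; ring
  have hFinv : 𝓕 (𝓕⁻ F) = F := hFc.fourier_fourierInv_eq hFint hFhat_int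
  have hFinvint : Integrable (𝓕⁻ F) := by
    have h1 : Integrable (fun ξ : ℝ => 𝓕 F (-ξ)) := hFhat_int.comp_neg
    have h2 : (𝓕⁻ F) = fun ξ : ℝ => 𝓕 F (-ξ) :=
      funext fun ξ => Real.fourierInv_eq_fourier_neg F ξ
    rw [h2]; exact h1
  have hparseval : ∫ x : ℝ, F x * G x = ∫ ξ : ℝ, (𝓕⁻ F) ξ * 𝓕 G ξ := by
    have hflip : (innerₗ ℝ).flip = innerₗ ℝ := by
      apply LinearMap.ext; intro x; apply LinearMap.ext; intro y
      simp [real_inner_comm]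
    have h := VectorFourier.integral_fourierIntegral_smul_eq_flip
      (e := Real.fourierChar) (μ := (volume : Measure ℝ)) (ν := (volume : Measure ℝ))
      (L := innerₗ ℝ) Real.continuous_fourierChar (by exact continuous_inner) hFinvint hGint
    rw [hflip] at h
    calc ∫ x : ℝ, F x * G x = ∫ ξ : ℝ, 𝓕 (𝓕⁻ F) ξ • G ξ := by
          rw [hFinv]; simp [smul_eq_mul]
      _ = ∫ x : ℝ, (𝓕⁻ F) x • 𝓕 G x := h
      _ = ∫ ξ : ℝ, (𝓕⁻ F) ξ * 𝓕 G ξ := by simp [smul_eq_mul]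
    rfl
  rw [hparseval]
  have nFinv : ∀ ξ : ℝ, ‖(𝓕⁻ F) ξ‖ = cl * a⁻¹ * ‖𝓕 ψ (-ξ/a)‖ := by
    intro ξ
    rw [Real.fourierInv_eq_fourier_neg, nF]
  have nG : ∀ ξ : ℝ, ‖𝓕 G ξ‖ = cj * (2*π*(|ξ|/b)) * ‖𝓕 ψ (-ξ/b)‖ := by
    intro ξ
    rw [hGdef, fourier_conj g₀ ξ, RCLike.norm_conj, hg0def]
    rw [norm_fourier_affine (deriv ψ) (cj*b) b (k:ℝ) hb (-ξ), hFψd]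
    simp only [norm_smul, norm_mul, Complex.norm_real, Complex.norm_I, Real.norm_eq_abs,
      Complex.norm_ofNat]
    rw [abs_of_pos Real.pi_pos, abs_of_pos (by positivity : (0:ℝ) < cj * b)]
    rw [show (-ξ)/b = -(ξ/b) by ring, abs_neg, abs_div, abs_of_pos hb, ← neg_div]
    field_simp
  set Kc : ℝ := 2*π*C^2*cl*cj*a⁻¹*(a/b)^(1-γ) with hKc
  have hKcpos : 0 < Kc := by
    rw [hKc]
    have := Real.rpow_pos_of_pos (div_pos ha hb) (1-γ)
    positivity
  have claim : ∀ ξ : ℝ, ‖(𝓕⁻ F) ξ * 𝓕 G ξ‖ ≤ Kc * Bf (a⁻¹ * ξ) := by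
    intro ξ
    rw [norm_mul, nFinv, nG]
    rcases eq_or_ne ξ 0 with rfl | hξ
    · simp [hBf]
    · have ht : (0:ℝ) < |ξ| := abs_pos.mpr hξ
      set t : ℝ := |ξ| with htdef
      have e1 : |(-(ξ/a))| = t/a := by rw [abs_neg, abs_div, abs_of_pos ha]
      have e2 : |(-(ξ/b))| = t/b := by rw [abs_neg, abs_div, abs_of_pos hb]
      have d1 : ‖𝓕 ψ (-(ξ/a))‖ ≤ C * (t/a)^γ / (1 + t/a) ^ (2*γ) := by
        have := hdecay (-(ξ/a)); rwa [e1] at this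
      have d2 : ‖𝓕 ψ (-(ξ/b))‖ ≤ C * (t/b) ^ (-γ) := by
        have := decay2 (-(ξ/b)); rwa [e2] at this
      have hBfval : Bf (a⁻¹ * ξ) = (t/a) * (1 + t/a) ^ (-(2*γ)) := by
        rw [hBf]
        simp only
        rw [abs_mul, abs_of_pos (inv_pos.mpr ha), inv_mul_eq_div, ← htdef]
      have lhs_le : cl * a⁻¹ * ‖𝓕 ψ (-ξ/a)‖ * (cj * (2*π*(t/b)) * ‖𝓕 ψ (-ξ/b)‖)
          ≤ cl * a⁻¹ * (C * (t/a)^γ / (1 + t/a) ^ (2*γ)) * (cj * (2*π*(t/b)) * (C * (t/b) ^ (-γ))) := by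
        apply mul_le_mul
        · apply mul_le_mul_of_nonneg_left _ (by positivity)
          rw [neg_div]; exact d1
        · apply mul_le_mul_of_nonneg_left _ (by positivity)
          rw [neg_div]; exact d2
        · positivity
        · positivity
      refine lhs_le.trans (le_of_eq ?_)
      rw [hBfval, hKc]
      have key := rcalc a b t γ ha hb ht
      have h2γ : (1 + t/a) ^ (-(2*γ)) = ((1 + t/a) ^ (2*γ))⁻¹ :=
        Real.rpow_neg (by positivity) _
      rw [h2γ]
      calc cl * a⁻¹ * (C * (t/a)^γ / (1 + t/a) ^ (2*γ)) * (cj * (2*π*(t/b)) * (C * (t/b) ^ (-γ)))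
          = (2*π*C^2*cl*cj*a⁻¹) * ((t/b) * ((t/a)^γ) * ((t/b)^(-γ))) / ((1 + t/a) ^ (2*γ)) := by
            ring
        _ = (2*π*C^2*cl*cj*a⁻¹) * ((a/b)^(1-γ) * (t/a)) / ((1 + t/a) ^ (2*γ)) := by rw [key]
        _ = 2*π*C^2*cl*cj*a⁻¹*(a/b)^(1-γ) * ((t/a) * ((1 + t/a) ^ (2*γ))⁻¹) := by ring
  have hdom_int : Integrable (fun ξ : ℝ => Kc * Bf (a⁻¹ * ξ)) :=
    (hBf_int.comp_mul_left' (by positivity : (a:ℝ)⁻¹ ≠ 0)).const_mul Kc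
  have step1 : ‖∫ ξ : ℝ, (𝓕⁻ F) ξ * 𝓕 G ξ‖ ≤ Kc * (a * B) := by
    calc ‖∫ ξ : ℝ, (𝓕⁻ F) ξ * 𝓕 G ξ‖ ≤ ∫ ξ : ℝ, ‖(𝓕⁻ F) ξ * 𝓕 G ξ‖ :=
          norm_integral_le_integral_norm _
      _ ≤ ∫ ξ : ℝ, Kc * Bf (a⁻¹ * ξ) :=
          integral_mono_of_nonneg (Filter.Eventually.of_forall fun ξ => norm_nonneg _)
            hdom_int (Filter.Eventually.of_forall claim)
      _ = Kc * ∫ ξ : ℝ, Bf (a⁻¹ * ξ) := integral_const_mul _ _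
      _ = Kc * (a * B) := by
          rw [MeasureTheory.Measure.integral_comp_mul_left Bf a⁻¹]
          rw [inv_inv, abs_of_pos ha, smul_eq_mul, hB]
  refine step1.trans ?_
  have hE : cl * cj * (a/b)^(1-γ) = 2 ^ ((l:ℝ) - ((l:ℝ)-(j:ℝ))*(γ-1/2)) := by
    rw [hcl, hcj, haa, hbb, ← Real.rpow_intCast 2 l, ← Real.rpow_intCast 2 j,
      ← Real.rpow_sub two_pos, ← Real.rpow_mul (by norm_num : (0:ℝ) ≤ 2),
      ← Real.rpow_add two_pos, ← Real.rpow_add two_pos]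
    congr 1
    push_cast
    ring
  have hKaB : Kc * (a * B) = (2*π*C^2*B) * 2 ^ ((l:ℝ) - ((l:ℝ)-(j:ℝ))*(γ-1/2)) := by
    rw [hKc, ← hE]
    field_simp
  rw [hKaB]
  apply mul_le_mul_of_nonneg_right (by linarith) (Real.rpow_nonneg (by norm_num) _)
end

section
/- Let μ : ℝ → ℝ be continuously differentiable and bounded below by some c > 0 on an interval D, with bounded derivative on D. Let ψ be a C¹ function supported in [−Γ, Γ] for some Γ > 0, and define ψ_{l,m}(x) = 2^{l/2}ψ(2^l x − m). Then for any j ≤ l, k, m ∈ ℤ with supp ψ_{l,m} ⊆ D, |⟨ψ_{l,m}, ψ_{j,k}′ / μ⟩| ≤ ‖1/μ‖_{L∞(D)} |⟨ψ_{l,m}, ψ_{j,k}′⟩| + 2^{−l+j} Γ ‖(1/μ)′‖_{L∞(D)} ‖ψ‖_{L²} ‖ψ′‖_{L²}. -/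
open MeasureTheory

set_option maxHeartbeats 1000000 in

lemma cs_int (f g : ℝ → ℝ) (hf : Continuous f) (hg : Continuous g)
    (hcf : HasCompactSupport f) (hcg : HasCompactSupport g) :
    ∫ x : ℝ, |f x| * |g x| ≤ Real.sqrt (∫ x : ℝ, f x ^ 2) * Real.sqrt (∫ x : ℝ, g x ^ 2) := by
  have hpq : Real.HolderConjugate 2 2 := Real.HolderConjugate.two_two
  have hf2 : MemLp (fun x => |f x|) (ENNReal.ofReal 2) volume :=
    Continuous.memLp_of_hasCompactSupport (μ := volume) hf.abs (hcf.comp_left abs_zero)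
  have hg2 : MemLp (fun x => |g x|) (ENNReal.ofReal 2) volume :=
    Continuous.memLp_of_hasCompactSupport (μ := volume) hg.abs (hcg.comp_left abs_zero)
  have key := integral_mul_le_Lp_mul_Lq_of_nonneg hpq
    (Filter.Eventually.of_forall fun x => abs_nonneg (f x))
    (Filter.Eventually.of_forall fun x => abs_nonneg (g x)) hf2 hg2
  have habs : ∀ h : ℝ → ℝ, (∫ x : ℝ, |h x| ^ (2:ℝ)) = ∫ x : ℝ, h x ^ 2 := by
    intro h
    refine integral_congr_ae (Filter.Eventually.of_forall fun x => ?_)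
    show |h x| ^ (2:ℝ) = h x ^ 2
    rw [show (2:ℝ) = ((2:ℕ):ℝ) by norm_num, Real.rpow_natCast, sq_abs]
  rw [habs, habs, ← Real.sqrt_eq_rpow, ← Real.sqrt_eq_rpow] at key
  exact key

lemma scaled_supp {h : ℝ → ℝ} {Γ : ℝ} (hs : ∀ x, h x ≠ 0 → x ∈ Set.Icc (-Γ) Γ)
    {a : ℝ} (ha : 0 < a) (b : ℝ) :
    ∀ x : ℝ, h (a * x - b) ≠ 0 → x ∈ Set.Icc ((b - Γ) / a) ((b + Γ) / a) := by
  intro x hx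
  obtain ⟨h1, h2⟩ := hs _ hx
  constructor
  · rw [div_le_iff₀ ha]; linarith
  · rw [le_div_iff₀ ha]; linarith

lemma sq_int_scaled (h : ℝ → ℝ) (n : ℤ) (b r : ℝ) :
    ∫ x : ℝ, (r * h ((2:ℝ) ^ n * x - b)) ^ 2
      = r ^ 2 * ((2:ℝ) ^ n)⁻¹ * ∫ x : ℝ, h x ^ 2 := by
  have h2n : (0:ℝ) < (2:ℝ) ^ n := by positivity
  have step1 : ∀ x : ℝ, (r * h ((2:ℝ) ^ n * x - b)) ^ 2
      = r ^ 2 * (h ((2:ℝ) ^ n * x - b)) ^ 2 := fun x => mul_pow _ _ _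
  calc (∫ x : ℝ, (r * h ((2:ℝ) ^ n * x - b)) ^ 2)
      = ∫ x : ℝ, r ^ 2 * (h ((2:ℝ) ^ n * x - b)) ^ 2 := by
        exact integral_congr_ae (Filter.Eventually.of_forall step1)
    _ = r ^ 2 * ∫ x : ℝ, (h ((2:ℝ) ^ n * x - b)) ^ 2 := integral_const_mul _ _
    _ = r ^ 2 * (((2:ℝ) ^ n)⁻¹ * ∫ x : ℝ, h x ^ 2) := by
        rw [show (∫ x : ℝ, (h ((2:ℝ) ^ n * x - b)) ^ 2)
            = ((2:ℝ) ^ n)⁻¹ * ∫ x : ℝ, h x ^ 2 from ?_]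
        calc (∫ x : ℝ, (h ((2:ℝ) ^ n * x - b)) ^ 2)
            = ∫ x : ℝ, (fun t => h (t - b) ^ 2) ((2:ℝ) ^ n * x) := rfl
          _ = |((2:ℝ) ^ n)⁻¹| • ∫ y : ℝ, h (y - b) ^ 2 :=
              MeasureTheory.Measure.integral_comp_mul_left (fun t => h (t - b) ^ 2) _
          _ = ((2:ℝ) ^ n)⁻¹ * ∫ x : ℝ, h x ^ 2 := by
              rw [integral_sub_right_eq_self (fun y => h y ^ 2) b, smul_eq_mul,
                abs_of_pos (inv_pos.mpr h2n)]
    _ = r ^ 2 * ((2:ℝ) ^ n)⁻¹ * ∫ x : ℝ, h x ^ 2 := by ring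

lemma main_est (d1 d2 B c : ℝ) (hD : d1 < d2) (hB : 0 ≤ B) (hc : 0 < c)
    (μ μ' : ℝ → ℝ) (hμ : ∀ x, HasDerivAt μ (μ' x) x) (hμ'c : Continuous μ')
    (hμpos : ∀ x ∈ Set.Icc d1 d2, c ≤ μ x)
    (F : ℝ → ℝ) (hFc : Continuous F) (hFcs : HasCompactSupport F)
    (x0 : ℝ) (hx0 : x0 ∈ Set.Icc d1 d2)
    (hFsupp : ∀ x, F x ≠ 0 → x ∈ Set.Icc d1 d2 ∧ |x - x0| ≤ B)
    (S : ℝ) (hS : (∫ x : ℝ, |F x|) ≤ S) :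
    |∫ x : ℝ, F x / μ x| ≤ (⨆ x : Set.Icc d1 d2, |1 / μ x.1|) * |∫ x : ℝ, F x|
      + (⨆ x : Set.Icc d1 d2, |deriv (fun y => 1 / μ y) x.1|) * B * S := by
  have hμc : Continuous μ := by
    rw [continuous_iff_continuousAt]; exact fun x => (hμ x).continuousAt
  have hμne : ∀ x ∈ Set.Icc d1 d2, μ x ≠ 0 := fun x hx => (hc.trans_le (hμpos x hx)).ne'
  have hgder : ∀ x ∈ Set.Icc d1 d2, HasDerivAt (fun y => 1 / μ y) (-(μ' x) / μ x ^ 2) x := by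
    intro x hx
    have := (hμ x).inv (hμne x hx)
    simp only [one_div]; exact this
  set M1 := (⨆ x : Set.Icc d1 d2, |1 / μ x.1|) with hM1def
  set M2 := (⨆ x : Set.Icc d1 d2, |deriv (fun y => 1 / μ y) x.1|) with hM2def
  -- boundedness of the two sups
  have hM1bdd : BddAbove (Set.range fun x : Set.Icc d1 d2 => |1 / μ x.1|) := by
    have hcont : ContinuousOn (fun x : ℝ => |1 / μ x|) (Set.Icc d1 d2) :=
      (continuousOn_const.div hμc.continuousOn hμne).abs
    rw [show (Set.range fun x : Set.Icc d1 d2 => |1 / μ x.1|)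
        = (fun x : ℝ => |1 / μ x|) '' (Set.Icc d1 d2) from
      (Set.image_eq_range (fun x : ℝ => |1 / μ x|) (Set.Icc d1 d2)).symm]
    exact (isCompact_Icc.image_of_continuousOn hcont).bddAbove
  have hM2bdd : BddAbove (Set.range fun x : Set.Icc d1 d2 =>
      |deriv (fun y => 1 / μ y) x.1|) := by
    have hcont0 : ContinuousOn (fun x : ℝ => |(-(μ' x)) / μ x ^ 2|) (Set.Icc d1 d2) :=
      ((hμ'c.neg.continuousOn).div ((hμc.pow 2).continuousOn)
        (fun x hx => pow_ne_zero 2 (hμne x hx))).abs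
    have hcont : ContinuousOn (fun x : ℝ => |deriv (fun y => 1 / μ y) x|) (Set.Icc d1 d2) :=
      hcont0.congr fun x hx => by rw [(hgder x hx).deriv]
    rw [show (Set.range fun x : Set.Icc d1 d2 => |deriv (fun y => 1 / μ y) x.1|)
        = (fun x : ℝ => |deriv (fun y => 1 / μ y) x|) '' (Set.Icc d1 d2) from
      (Set.image_eq_range (fun x : ℝ => |deriv (fun y => 1 / μ y) x|) (Set.Icc d1 d2)).symm]
    exact (isCompact_Icc.image_of_continuousOn hcont).bddAbove
  have hM1le : ∀ x ∈ Set.Icc d1 d2, |1 / μ x| ≤ M1 := fun x hx => le_ciSup hM1bdd ⟨x, hx⟩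
  have hM2le : ∀ x ∈ Set.Icc d1 d2, |deriv (fun y => 1 / μ y) x| ≤ M2 :=
    fun x hx => le_ciSup hM2bdd ⟨x, hx⟩
  have hM2nonneg : 0 ≤ M2 := le_trans (abs_nonneg _) (hM2le d1 ⟨le_refl _, hD.le⟩)
  -- Lipschitz bound on the support of F
  have hLip : ∀ x, F x ≠ 0 → |1 / μ x - 1 / μ x0| ≤ M2 * B := by
    intro x hx
    obtain ⟨hxI, hxd⟩ := hFsupp x hx
    have key := Convex.norm_image_sub_le_of_norm_hasDerivWithin_le
      (f := fun y => 1 / μ y) (f' := fun y => -(μ' y) / μ y ^ 2) (C := M2)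
      (fun y hy => (hgder y hy).hasDerivWithinAt)
      (fun y hy => by
        show ‖-(μ' y) / μ y ^ 2‖ ≤ M2
        rw [Real.norm_eq_abs, ← (hgder y hy).deriv]; exact hM2le y hy)
      (convex_Icc d1 d2) hx0 hxI
    rw [Real.norm_eq_abs, Real.norm_eq_abs] at key
    calc |1 / μ x - 1 / μ x0| ≤ M2 * |x - x0| := key
      _ ≤ M2 * B := mul_le_mul_of_nonneg_left hxd hM2nonneg
  -- integrability
  have hFint : Integrable F := hFc.integrable_of_hasCompactSupport hFcs
  have hgmeas : AEStronglyMeasurable (fun x : ℝ => 1 / μ x) volume :=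
    (measurable_const.div hμc.measurable).aestronglyMeasurable
  have hFg : Integrable (fun x => F x * (1 / μ x)) := by
    refine Integrable.mono' (hFint.abs.const_mul c⁻¹)
      (hFc.aestronglyMeasurable.mul hgmeas) (Filter.Eventually.of_forall fun x => ?_)
    by_cases hx : F x = 0
    · simp [hx]
    · have hxI := (hFsupp x hx).1
      have hcμ := hμpos x hxI
      rw [Real.norm_eq_abs, abs_mul]
      have hμx : (0:ℝ) < μ x := hc.trans_le hcμ
      have h1 : |1 / μ x| ≤ c⁻¹ := by
        rw [abs_of_nonneg (one_div_pos.mpr hμx).le, one_div]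
        exact inv_anti₀ hc hcμ
      calc |F x| * |1 / μ x| ≤ |F x| * c⁻¹ := mul_le_mul_of_nonneg_left h1 (abs_nonneg _)
        _ = c⁻¹ * |F x| := mul_comm _ _
  have hsub : Integrable (fun x => F x * (1 / μ x - 1 / μ x0)) := by
    have he : (fun x => F x * (1 / μ x - 1 / μ x0))
        = fun x => F x * (1 / μ x) - F x * (1 / μ x0) := funext fun x => mul_sub _ _ _
    rw [he]; exact hFg.sub (hFint.mul_const _)
  -- splitting
  have hintrw : (∫ x : ℝ, F x / μ x) = ∫ x : ℝ, F x * (1 / μ x) := by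
    refine integral_congr_ae (Filter.Eventually.of_forall fun x => ?_)
    show F x / μ x = F x * (1 / μ x)
    rw [mul_one_div]
  have hsplit : (∫ x : ℝ, F x * (1 / μ x))
      = (1 / μ x0) * (∫ x : ℝ, F x) + ∫ x : ℝ, F x * (1 / μ x - 1 / μ x0) := by
    calc (∫ x : ℝ, F x * (1 / μ x))
        = ∫ x : ℝ, ((1 / μ x0) * F x + F x * (1 / μ x - 1 / μ x0)) := by
          refine integral_congr_ae (Filter.Eventually.of_forall fun x => ?_); ring
      _ = (∫ x : ℝ, (1 / μ x0) * F x) + ∫ x : ℝ, F x * (1 / μ x - 1 / μ x0) :=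
          integral_add (hFint.const_mul _) hsub
      _ = (1 / μ x0) * (∫ x : ℝ, F x) + ∫ x : ℝ, F x * (1 / μ x - 1 / μ x0) := by
          rw [integral_const_mul]
  rw [hintrw, hsplit]
  have hterm2 : |∫ x : ℝ, F x * (1 / μ x - 1 / μ x0)| ≤ M2 * B * (∫ x : ℝ, |F x|) := by
    have h1 : |∫ x : ℝ, F x * (1 / μ x - 1 / μ x0)|
        ≤ ∫ x : ℝ, |F x * (1 / μ x - 1 / μ x0)| := by
      exact norm_integral_le_integral_norm (fun x : ℝ => F x * (1 / μ x - 1 / μ x0))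
    refine h1.trans ?_
    have h2 : (∫ x : ℝ, |F x * (1 / μ x - 1 / μ x0)|) ≤ ∫ x : ℝ, |F x| * (M2 * B) := by
      refine integral_mono hsub.abs (hFint.abs.mul_const _) fun x => ?_
      by_cases hx : F x = 0
      · simp [hx]
      · rw [abs_mul]
        exact mul_le_mul_of_nonneg_left (hLip x hx) (abs_nonneg _)
    refine h2.trans ?_
    rw [integral_mul_const]
    exact le_of_eq (by ring)
  calc |(1 / μ x0) * (∫ x : ℝ, F x) + ∫ x : ℝ, F x * (1 / μ x - 1 / μ x0)|
      ≤ |(1 / μ x0) * (∫ x : ℝ, F x)| + |∫ x : ℝ, F x * (1 / μ x - 1 / μ x0)| := abs_add_le _ _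
    _ ≤ M1 * |∫ x : ℝ, F x| + M2 * B * (∫ x : ℝ, |F x|) := by
        refine add_le_add ?_ hterm2
        rw [abs_mul]
        exact mul_le_mul_of_nonneg_right (hM1le x0 hx0) (abs_nonneg _)
    _ ≤ M1 * |∫ x : ℝ, F x| + M2 * B * S := by
        exact add_le_add_right (mul_le_mul_of_nonneg_left hS (mul_nonneg hM2nonneg hB)) _


/-- Taylor-expansion bound for the wavelet coefficient against `ψ_{j,k}'/μ`:
`|⟨ψ_{l,m}, ψ_{j,k}'/μ⟩| ≤ ‖1/μ‖_{L∞(D)} |⟨ψ_{l,m}, ψ_{j,k}'⟩|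
    + 2^{-l+j} Γ ‖(1/μ)'‖_{L∞(D)} ‖ψ‖_{L²} ‖ψ'‖_{L²}`. -/
theorem stmt7 (d1 d2 Γ c : ℝ) (hD : d1 < d2) (hΓ : 0 < Γ) (hc : 0 < c)
    (μ μ' ψ ψ' : ℝ → ℝ)
    (hμ : ∀ x, HasDerivAt μ (μ' x) x) (hμ'c : Continuous μ')
    (hμpos : ∀ x ∈ Set.Icc d1 d2, c ≤ μ x)
    (hψ : ∀ x, HasDerivAt ψ (ψ' x) x) (hψ'c : Continuous ψ')
    (hsupp : ∀ x : ℝ, ψ x ≠ 0 → x ∈ Set.Icc (-Γ) Γ)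
    (j l k m : ℤ) (hjl : j ≤ l)
    (hwindow : Set.Icc (((m : ℝ) - Γ) * (2:ℝ) ^ (-l)) (((m : ℝ) + Γ) * (2:ℝ) ^ (-l))
        ⊆ Set.Icc d1 d2) :
    |∫ x : ℝ, ((2:ℝ) ^ ((l : ℝ) / 2) * ψ ((2:ℝ) ^ l * x - (m : ℝ))) *
        ((2:ℝ) ^ ((j : ℝ) / 2) * (2:ℝ) ^ j * ψ' ((2:ℝ) ^ j * x - (k : ℝ))) / μ x|
      ≤ (⨆ x : Set.Icc d1 d2, |1 / μ x.1|) *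
          |∫ x : ℝ, ((2:ℝ) ^ ((l : ℝ) / 2) * ψ ((2:ℝ) ^ l * x - (m : ℝ))) *
            ((2:ℝ) ^ ((j : ℝ) / 2) * (2:ℝ) ^ j * ψ' ((2:ℝ) ^ j * x - (k : ℝ)))|
        + 2 ^ (-(l : ℝ) + (j : ℝ)) * Γ *
            (⨆ x : Set.Icc d1 d2, |deriv (fun y => 1 / μ y) x.1|) *
            Real.sqrt (∫ x : ℝ, ψ x ^ 2) * Real.sqrt (∫ x : ℝ, ψ' x ^ 2) := by
  have hψc : Continuous ψ := by
    rw [continuous_iff_continuousAt]; exact fun x => (hψ x).continuousAt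
  have hψ'supp : ∀ x : ℝ, ψ' x ≠ 0 → x ∈ Set.Icc (-Γ) Γ := by
    intro x
    contrapose!
    intro hx
    have hopen : (Set.Icc (-Γ) Γ)ᶜ ∈ nhds x := isClosed_Icc.isOpen_compl.mem_nhds hx
    have heq : ψ =ᶠ[nhds x] fun _ => (0:ℝ) := by
      filter_upwards [hopen] with y hy
      by_contra h0; exact hy (hsupp y h0)
    rw [← (hψ x).deriv, heq.deriv_eq, deriv_const]
  have h2l : (0:ℝ) < (2:ℝ) ^ l := by positivity
  have h2nl : (0:ℝ) < (2:ℝ) ^ (-l) := by positivity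
  have h2j : (0:ℝ) < (2:ℝ) ^ j := by positivity
  have h2nj : (0:ℝ) < (2:ℝ) ^ (-j) := by positivity
  have hdiv : ∀ n : ℤ, ∀ y : ℝ, y / (2:ℝ) ^ n = y * (2:ℝ) ^ (-n) := by
    intro n y; rw [zpow_neg, div_eq_mul_inv]
  -- support of the rescaled functions
  have hsupφl : ∀ x : ℝ, ψ ((2:ℝ) ^ l * x - (m:ℝ)) ≠ 0 →
      x ∈ Set.Icc (((m:ℝ) - Γ) * (2:ℝ) ^ (-l)) (((m:ℝ) + Γ) * (2:ℝ) ^ (-l)) := by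
    intro x hx
    have := scaled_supp hsupp h2l (m:ℝ) x hx
    rwa [hdiv, hdiv] at this
  have hsupφj : ∀ x : ℝ, ψ' ((2:ℝ) ^ j * x - (k:ℝ)) ≠ 0 →
      x ∈ Set.Icc (((k:ℝ) - Γ) * (2:ℝ) ^ (-j)) (((k:ℝ) + Γ) * (2:ℝ) ^ (-j)) := by
    intro x hx
    have := scaled_supp hψ'supp h2j (k:ℝ) x hx
    rwa [hdiv, hdiv] at this
  -- continuity
  have hφlc : Continuous (fun x : ℝ => (2:ℝ) ^ ((l : ℝ) / 2) * ψ ((2:ℝ) ^ l * x - (m:ℝ))) :=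
    continuous_const.mul (hψc.comp ((continuous_const.mul continuous_id).sub continuous_const))
  have hφjc : Continuous (fun x : ℝ =>
      (2:ℝ) ^ ((j : ℝ) / 2) * (2:ℝ) ^ j * ψ' ((2:ℝ) ^ j * x - (k:ℝ))) :=
    continuous_const.mul (hψ'c.comp ((continuous_const.mul continuous_id).sub continuous_const))
  have hFc : Continuous (fun x : ℝ =>
      ((2:ℝ) ^ ((l : ℝ) / 2) * ψ ((2:ℝ) ^ l * x - (m:ℝ))) *
        ((2:ℝ) ^ ((j : ℝ) / 2) * (2:ℝ) ^ j * ψ' ((2:ℝ) ^ j * x - (k:ℝ)))) := hφlc.mul hφjc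
  -- compact supports
  have hφlcs : HasCompactSupport
      (fun x : ℝ => (2:ℝ) ^ ((l : ℝ) / 2) * ψ ((2:ℝ) ^ l * x - (m:ℝ))) := by
    refine HasCompactSupport.intro (isCompact_Icc
      (a := ((m:ℝ) - Γ) * (2:ℝ) ^ (-l)) (b := ((m:ℝ) + Γ) * (2:ℝ) ^ (-l))) fun x hx => ?_
    by_contra h0
    exact hx (hsupφl x fun h1 => h0 (by rw [h1, mul_zero]))
  have hφjcs : HasCompactSupport (fun x : ℝ =>
      (2:ℝ) ^ ((j : ℝ) / 2) * (2:ℝ) ^ j * ψ' ((2:ℝ) ^ j * x - (k:ℝ))) := by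
    refine HasCompactSupport.intro (isCompact_Icc
      (a := ((k:ℝ) - Γ) * (2:ℝ) ^ (-j)) (b := ((k:ℝ) + Γ) * (2:ℝ) ^ (-j))) fun x hx => ?_
    by_contra h0
    exact hx (hsupφj x fun h1 => h0 (by rw [h1, mul_zero]))
  have hFcs : HasCompactSupport (fun x : ℝ =>
      ((2:ℝ) ^ ((l : ℝ) / 2) * ψ ((2:ℝ) ^ l * x - (m:ℝ))) *
        ((2:ℝ) ^ ((j : ℝ) / 2) * (2:ℝ) ^ j * ψ' ((2:ℝ) ^ j * x - (k:ℝ)))) := hφlcs.mul_right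
  -- squared integrals
  have hc2l : ((2:ℝ) ^ ((l : ℝ) / 2)) ^ 2 = (2:ℝ) ^ l := by
    rw [← Real.rpow_natCast ((2:ℝ) ^ ((l:ℝ)/2)) 2, ← Real.rpow_mul (by norm_num : (0:ℝ) ≤ 2)]
    norm_num
  have hc2j : ((2:ℝ) ^ ((j : ℝ) / 2)) ^ 2 = (2:ℝ) ^ j := by
    rw [← Real.rpow_natCast ((2:ℝ) ^ ((j:ℝ)/2)) 2, ← Real.rpow_mul (by norm_num : (0:ℝ) ≤ 2)]
    norm_num
  have hIl : (∫ x : ℝ, ((2:ℝ) ^ ((l : ℝ) / 2) * ψ ((2:ℝ) ^ l * x - (m:ℝ))) ^ 2)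
      = ∫ x : ℝ, ψ x ^ 2 := by
    rw [sq_int_scaled ψ l (m:ℝ) ((2:ℝ) ^ ((l : ℝ) / 2)), hc2l,
      mul_inv_cancel₀ h2l.ne', one_mul]
  have hIj : (∫ x : ℝ, ((2:ℝ) ^ ((j : ℝ) / 2) * (2:ℝ) ^ j * ψ' ((2:ℝ) ^ j * x - (k:ℝ))) ^ 2)
      = ((2:ℝ) ^ j) ^ 2 * ∫ x : ℝ, ψ' x ^ 2 := by
    rw [sq_int_scaled ψ' j (k:ℝ) ((2:ℝ) ^ ((j : ℝ) / 2) * (2:ℝ) ^ j)]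
    congr 1
    rw [mul_pow, hc2j]
    field_simp
  -- Cauchy-Schwarz
  have hCS : (∫ x : ℝ, |((2:ℝ) ^ ((l : ℝ) / 2) * ψ ((2:ℝ) ^ l * x - (m:ℝ))) *
        ((2:ℝ) ^ ((j : ℝ) / 2) * (2:ℝ) ^ j * ψ' ((2:ℝ) ^ j * x - (k:ℝ)))|)
      ≤ Real.sqrt (∫ x : ℝ, ψ x ^ 2) * ((2:ℝ) ^ j * Real.sqrt (∫ x : ℝ, ψ' x ^ 2)) := by
    have h := cs_int _ _ hφlc hφjc hφlcs hφjcs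
    beta_reduce at h
    rw [hIl, hIj, Real.sqrt_mul (sq_nonneg _), Real.sqrt_sq h2j.le] at h
    refine le_trans (le_of_eq ?_) h
    exact integral_congr_ae (Filter.Eventually.of_forall fun x => abs_mul _ _)
  -- support facts for F
  have hFsupp : ∀ x : ℝ, ((2:ℝ) ^ ((l : ℝ) / 2) * ψ ((2:ℝ) ^ l * x - (m:ℝ))) *
        ((2:ℝ) ^ ((j : ℝ) / 2) * (2:ℝ) ^ j * ψ' ((2:ℝ) ^ j * x - (k:ℝ))) ≠ 0 →
      x ∈ Set.Icc d1 d2 ∧ |x - (m:ℝ) * (2:ℝ) ^ (-l)| ≤ Γ * (2:ℝ) ^ (-l) := by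
    intro x hx
    have hl0 : ψ ((2:ℝ) ^ l * x - (m:ℝ)) ≠ 0 := by
      intro h0
      exact hx (by rw [h0, mul_zero, zero_mul])
    have hw := hsupφl x hl0
    refine ⟨hwindow hw, ?_⟩
    obtain ⟨ha, hb⟩ := hw
    rw [abs_le]
    constructor <;> nlinarith [h2nl.le]
  have hx0 : (m:ℝ) * (2:ℝ) ^ (-l) ∈ Set.Icc d1 d2 := by
    refine hwindow ⟨?_, ?_⟩ <;> nlinarith [h2nl.le, hΓ.le]
  -- main estimate
  have hmain := main_est d1 d2 (Γ * (2:ℝ) ^ (-l)) c hD (by positivity) hc μ μ' hμ hμ'c hμpos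
    (fun x : ℝ => ((2:ℝ) ^ ((l : ℝ) / 2) * ψ ((2:ℝ) ^ l * x - (m:ℝ))) *
      ((2:ℝ) ^ ((j : ℝ) / 2) * (2:ℝ) ^ j * ψ' ((2:ℝ) ^ j * x - (k:ℝ))))
    hFc hFcs ((m:ℝ) * (2:ℝ) ^ (-l)) hx0 hFsupp
    (Real.sqrt (∫ x : ℝ, ψ x ^ 2) * ((2:ℝ) ^ j * Real.sqrt (∫ x : ℝ, ψ' x ^ 2))) hCS
  beta_reduce at hmain
  have hrp : (2:ℝ) ^ (-(l : ℝ) + (j : ℝ)) = (2:ℝ) ^ (-l) * (2:ℝ) ^ j := by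
    rw [show (-(l:ℝ) + (j:ℝ)) = (((-l + j : ℤ) : ℝ)) by push_cast; ring,
      Real.rpow_intCast, zpow_add₀ (two_ne_zero)]
  exact hmain.trans (le_of_eq (by rw [hrp]; ring))
end
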